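/- The family (a_ν), indexed by strictly decreasing tuples ν_1 > ν_2 > … > ν_n ≥ 0 of nonnegative integers, is an R-basis of the R-module of skew-symmetric polynomials in P = R[x_1, …, x_n] (i.e. it is R-linearly independent and spans that module). -/

import Mathlib

/- R = ℤ[t₁, t₂, …] with tₖ encoded as `MvPolynomial.X (k-1)`, i.e. 0-indexed;
   P = R[x₁, …, xₙ] = MvPolynomial (Fin n) R. -/

open MvPolynomial

noncomputable section

abbrev R : Type := MvPolynomial ℕ ℤ

abbrev P (n : ℕ) : Type := MvPolynomial (Fin n) R

/-- The double monomial `(x_i | t)^k = (x_i + t₁) ⋯ (x_i + tₖ)`. -/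
def dm (n : ℕ) (i : Fin n) (k : ℕ) : P n :=
  ∏ j ∈ Finset.range k, (X i + C (MvPolynomial.X j : R))

/-- `a_ν = Σ_{σ ∈ S_n} sgn(σ) Π_i (x_{σ(i)} | t)^{ν_i}`. -/
def aPoly (n : ℕ) (ν : Fin n → ℕ) : P n :=
  ∑ σ : Equiv.Perm (Fin n), (Equiv.Perm.sign σ : ℤ) • ∏ i : Fin n, dm n (σ i) (ν i)

/-- A polynomial `f ∈ P` is skew-symmetric if `σ · f = sgn(σ) f` for every
permutation `σ` of the variables. -/
def IsSkew (n : ℕ) (f : P n) : Prop :=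
  ∀ σ : Equiv.Perm (Fin n), rename σ f = (Equiv.Perm.sign σ : ℤ) • f

/-- `Λₙ^sgn`, the `R`-submodule of skew-symmetric polynomials of `P`. -/
def SkewSub (n : ℕ) : Submodule R (P n) where
  carrier := {f | IsSkew n f}
  add_mem' := by
    intro f g hf hg σ
    rw [map_add, hf σ, hg σ, smul_add]
  zero_mem' := by
    intro σ
    simp
  smul_mem' := by
    intro c f hf σ
    rw [map_smul, hf σ, smul_comm]

namespace Skew

/-- `fs ν` : the finsupp corresponding to a tuple. -/
def fs {n : ℕ} (ν : Fin n → ℕ) : Fin n →₀ ℕ := Finsupp.equivFunOnFinite.symm ν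

@[simp] lemma fs_apply {n : ℕ} (ν : Fin n → ℕ) (i : Fin n) : fs ν i = ν i := rfl

@[simp] lemma coe_fs {n : ℕ} (ν : Fin n → ℕ) : ⇑(fs ν) = ν := rfl

lemma fs_injective {n : ℕ} : Function.Injective (fs (n := n)) :=
  Finsupp.equivFunOnFinite.symm.injective

@[simp] lemma fs_coe {n : ℕ} (e : Fin n →₀ ℕ) : fs ⇑e = e :=
  Finsupp.equivFunOnFinite_symm_coe e

/-- degree of a finsupp exponent equals the full sum. -/
lemma degree_eq_sum {n : ℕ} (e : Fin n →₀ ℕ) :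
    (∑ i ∈ e.support, e i) = ∑ i : Fin n, e i := by
  apply Finset.sum_subset (Finset.subset_univ _)
  intro i _ hi
  simpa using (Finsupp.notMem_support_iff.mp hi)

/-- a strictly antitone tuple rearranged by a permutation staying strictly
antitone forces the permutation to be the identity. -/
lemma perm_eq_one {n : ℕ} {ν : Fin n → ℕ} (hν : StrictAnti ν)
    (σ : Equiv.Perm (Fin n)) (h : StrictAnti (ν ∘ ⇑σ)) : σ = 1 := by
  have hmono : StrictMono ⇑σ := by
    intro i j hij
    rcases lt_trichotomy (σ i) (σ j) with h' | h' | h'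
    · exact h'
    · exact absurd (σ.injective h') (ne_of_lt hij)
    · exact absurd (hν h') (not_lt.mpr (le_of_lt (h hij)))
  have : ⇑σ = id := by
    apply (hmono.range_inj strictMono_id).mp
    simp [σ.surjective.range_eq]
  exact Equiv.Perm.ext fun i => congrFun this i

lemma anti_unique {n : ℕ} {μ ν : Fin n → ℕ} (hμ : StrictAnti μ) (hν : StrictAnti ν)
    (σ : Equiv.Perm (Fin n)) (h : μ ∘ ⇑σ = ν) : μ = ν ∧ σ = 1 := by
  have hσ : σ = 1 := perm_eq_one hμ σ (h ▸ hν)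
  subst hσ
  refine ⟨?_, rfl⟩
  simpa using h

/-- every injective tuple can be sorted to a strictly antitone one. -/
lemma exists_sort {n : ℕ} (e : Fin n → ℕ) (he : Function.Injective e) :
    ∃ σ : Equiv.Perm (Fin n), StrictAnti (e ∘ ⇑σ) := by
  refine ⟨Tuple.sort e * Fin.revPerm, ?_⟩
  have h1 : StrictMono (e ∘ ⇑(Tuple.sort e)) :=
    (Tuple.monotone_sort e).strictMono_of_injective
      (he.comp (Tuple.sort e).injective)
  have h2 : StrictAnti (⇑(Fin.revPerm (n := n))) := by
    intro i j hij
    simpa [Fin.revPerm] using Fin.rev_lt_rev.mpr hij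
  have := h1.comp_strictAnti h2
  convert this using 1
  rfl

lemma prod_X_pow {n : ℕ} (ν : Fin n → ℕ) :
    (∏ i : Fin n, (X i : P n) ^ ν i) = monomial (fs ν) 1 := by
  rw [← prod_X_pow_eq_monomial]
  symm
  apply Finset.prod_subset (Finset.subset_univ _)
  intro i _ hi
  have : ν i = 0 := by simpa using (Finsupp.notMem_support_iff.mp hi)
  simp [this]

lemma prod_X_pow_perm {n : ℕ} (ν : Fin n → ℕ) (σ : Equiv.Perm (Fin n)) :
    (∏ i : Fin n, (X (σ i) : P n) ^ ν i) = monomial (fs (ν ∘ ⇑σ.symm)) 1 := by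
  rw [← prod_X_pow]
  rw [← Equiv.prod_comp σ (fun j => (X j : P n) ^ (ν ∘ ⇑σ.symm) j)]
  apply Finset.prod_congr rfl
  intro i _
  simp

/-- the antisymmetrized monomial `m_ν`. -/
def mPoly (n : ℕ) (ν : Fin n → ℕ) : P n :=
  ∑ σ : Equiv.Perm (Fin n), (Equiv.Perm.sign σ : ℤ) • (monomial (fs (ν ∘ ⇑σ.symm)) (1 : R))

lemma coeff_mPoly {n : ℕ} (ν : Fin n → ℕ) (d : Fin n →₀ ℕ) :
    coeff d (mPoly n ν) =
      ∑ σ : Equiv.Perm (Fin n),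
        (Equiv.Perm.sign σ : ℤ) • (if ν ∘ ⇑σ.symm = ⇑d then (1 : R) else 0) := by
  classical
  unfold mPoly
  rw [coeff_sum]
  apply Finset.sum_congr rfl
  intro σ _
  rw [coeff_smul, coeff_monomial]
  congr 1
  by_cases h : fs (ν ∘ ⇑σ.symm) = d
  · have h' : ν ∘ ⇑σ.symm = ⇑d := by rw [← h]; rfl
    simp [h, h']
  · have h' : ¬ (ν ∘ ⇑σ.symm = ⇑d) := fun hc => h (by rw [← fs_coe d, ← hc])
    simp [h, h']

/-- coefficient of `m_μ` at a non-injective exponent vanishes. -/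
lemma coeff_mPoly_of_not_inj {n : ℕ} {μ : Fin n → ℕ} (hμ : StrictAnti μ)
    {d : Fin n →₀ ℕ} (hd : ¬ Function.Injective ⇑d) :
    coeff d (mPoly n μ) = 0 := by
  rw [coeff_mPoly]
  apply Finset.sum_eq_zero
  intro σ _
  have : ¬ (μ ∘ ⇑σ.symm = ⇑d) := by
    intro h
    exact hd (h ▸ (hμ.injective.comp σ.symm.injective))
  simp [this]

/-- coefficient of `m_μ` at an injective exponent `d` with `d ∘ σ₀` strictly
antitone. -/
lemma coeff_mPoly_inj {n : ℕ} {μ : Fin n → ℕ} (hμ : StrictAnti μ)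
    {d : Fin n →₀ ℕ} (σ₀ : Equiv.Perm (Fin n)) (hσ₀ : StrictAnti (⇑d ∘ ⇑σ₀)) :
    coeff d (mPoly n μ) =
      if μ = ⇑d ∘ ⇑σ₀ then ((Equiv.Perm.sign σ₀ : ℤ) : R) else 0 := by
  classical
  rw [coeff_mPoly]
  have key : ∀ σ : Equiv.Perm (Fin n), (μ ∘ ⇑σ.symm = ⇑d) ↔ (μ = ⇑d ∘ ⇑σ₀ ∧ σ = σ₀) := by
    intro σ
    constructor
    · intro h
      have hcomp : μ ∘ ⇑(σ.symm * σ₀).symm.symm = ⇑d ∘ ⇑σ₀ := by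
        funext i
        have := congrFun h (σ₀ i)
        simpa using this
      obtain ⟨h1, h2⟩ := anti_unique hμ hσ₀ ((σ.symm * σ₀)) (by
        funext i
        have := congrFun h (σ₀ i)
        simpa using this)
      refine ⟨h1, ?_⟩
      have h3 : σ₀⁻¹ = σ.symm := inv_eq_of_mul_eq_one_left h2
      exact (inv_injective (h3 : σ₀⁻¹ = σ⁻¹)).symm
    · rintro ⟨h1, h2⟩
      subst h2; subst h1
      funext j
      simp
  by_cases hμd : μ = ⇑d ∘ ⇑σ₀
  · have hterm : ∀ σ : Equiv.Perm (Fin n),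
        (Equiv.Perm.sign σ : ℤ) • (if μ ∘ ⇑σ.symm = ⇑d then (1 : R) else 0) =
          if σ = σ₀ then ((Equiv.Perm.sign σ₀ : ℤ) : R) else 0 := by
      intro σ
      by_cases h : σ = σ₀
      · subst h
        have : μ ∘ ⇑σ.symm = ⇑d := (key σ).mpr ⟨hμd, rfl⟩
        simp [this, zsmul_eq_mul]
      · have : ¬ (μ ∘ ⇑σ.symm = ⇑d) := fun hc => h ((key σ).mp hc).2
        simp [this, h]
    rw [Finset.sum_congr rfl (fun σ _ => hterm σ), Finset.sum_ite_eq']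
    simp [hμd]
  · have hterm : ∀ σ : Equiv.Perm (Fin n), ¬ (μ ∘ ⇑σ.symm = ⇑d) :=
      fun σ hc => hμd ((key σ).mp hc).1
    rw [Finset.sum_eq_zero]
    · simp [hμd]
    · intro σ _
      simp [hterm σ]


lemma rename_dm {n : ℕ} (τ : Equiv.Perm (Fin n)) (i : Fin n) (k : ℕ) :
    rename ⇑τ (dm n i k) = dm n (τ i) k := by
  unfold dm
  rw [map_prod]
  apply Finset.prod_congr rfl
  intro j _
  rw [map_add, rename_X, rename_C]

lemma aPoly_skew {n : ℕ} (ν : Fin n → ℕ) : IsSkew n (aPoly n ν) := by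
  intro τ
  unfold aPoly
  rw [map_sum, Finset.smul_sum]
  rw [← Equiv.sum_comp (Equiv.mulLeft τ)
    (fun σ => (Equiv.Perm.sign τ : ℤ) • (Equiv.Perm.sign σ : ℤ) •
      ∏ i : Fin n, dm n (σ i) (ν i))]
  apply Finset.sum_congr rfl
  intro σ _
  rw [map_zsmul, map_prod]
  rw [Finset.prod_congr rfl (fun i _ => rename_dm τ (σ i) (ν i))]
  have hs : ((Equiv.Perm.sign τ : ℤ)) * ((Equiv.Perm.sign (τ * σ) : ℤ)) =
      (Equiv.Perm.sign σ : ℤ) := by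
    rw [map_mul]
    push_cast
    rcases Int.units_eq_one_or (Equiv.Perm.sign τ) with h | h <;> simp [h]
  simp only [Equiv.coe_mulLeft, Equiv.Perm.mul_apply, smul_smul, hs]

/-- for skew `f`, permuted coefficients. -/
lemma skew_coeff {n : ℕ} {f : P n} (hf : IsSkew n f) (σ : Equiv.Perm (Fin n))
    (e : Fin n → ℕ) :
    coeff (fs (e ∘ ⇑σ)) f = (Equiv.Perm.sign σ : ℤ) • coeff (fs e) f := by
  have hmap : Finsupp.mapDomain ⇑σ (fs (e ∘ ⇑σ)) = fs e := by
    ext j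
    rw [Finsupp.mapDomain_equiv_apply]
    simp
  have h1 : coeff (fs e) (rename ⇑σ f) = coeff (fs (e ∘ ⇑σ)) f := by
    rw [← hmap]
    exact coeff_rename_mapDomain ⇑σ σ.injective f _
  rw [← h1, hf σ, coeff_smul]

lemma skew_coeff_not_inj {n : ℕ} {f : P n} (hf : IsSkew n f)
    {e : Fin n → ℕ} (he : ¬ Function.Injective e) : coeff (fs e) f = 0 := by
  rw [Function.not_injective_iff] at he
  obtain ⟨i, j, hij, hne⟩ := he
  have hswap : e ∘ ⇑(Equiv.swap i j) = e := by
    funext k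
    rcases eq_or_ne k i with rfl | hki
    · simp [Equiv.swap_apply_left, hij]
    · rcases eq_or_ne k j with rfl | hkj
      · simp [Equiv.swap_apply_right, hij]
      · simp [Equiv.swap_apply_of_ne_of_ne hki hkj]
  have := skew_coeff hf (Equiv.swap i j) e
  rw [hswap, Equiv.Perm.sign_swap hne] at this
  have h2 : (2 : R) * coeff (fs e) f = 0 := by
    have := this
    simp only [Units.val_neg, Units.val_one, neg_smul, one_smul] at this
    linear_combination this
  rcases mul_eq_zero.mp h2 with h | h
  · exact absurd h two_ne_zero
  · exact h

/-- `Small q D` : `q` vanishes or has total degree `< D`. -/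
def Small {n : ℕ} (q : P n) (D : ℕ) : Prop := q = 0 ∨ q.totalDegree < D

lemma small_zero {n : ℕ} (D : ℕ) : Small (0 : P n) D := Or.inl rfl

lemma small_mono {n : ℕ} {q : P n} {D D' : ℕ} (h : Small q D) (hD : D ≤ D') :
    Small q D' := h.imp id fun h' => lt_of_lt_of_le h' hD

lemma small_add {n : ℕ} {q q' : P n} {D : ℕ} (h : Small q D) (h' : Small q' D) :
    Small (q + q') D := by
  rcases h with rfl | h
  · simpa using h'
  rcases h' with rfl | h'
  · rw [add_zero]; exact Or.inr h
  rcases eq_or_ne (q + q') 0 with h0 | h0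
  · exact Or.inl h0
  · exact Or.inr (lt_of_le_of_lt (totalDegree_add q q') (max_lt h h'))

lemma small_sum {n : ℕ} {ι : Type*} (s : Finset ι) (h : ι → P n) (D : ℕ)
    (hs : ∀ i ∈ s, Small (h i) D) : Small (∑ i ∈ s, h i) D := by
  classical
  induction s using Finset.induction_on with
  | empty => simpa using small_zero D
  | insert a s ha ih =>
    rw [Finset.sum_insert ha]
    exact small_add (hs _ (Finset.mem_insert_self _ _))
      (ih fun i hi => hs i (Finset.mem_insert_of_mem hi))

lemma small_zsmul {n : ℕ} {q : P n} {D : ℕ} (c : ℤ) (h : Small q D) :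
    Small (c • q) D := by
  rcases h with rfl | h
  · simpa using small_zero D
  rcases eq_or_ne (c • q) 0 with h0 | h0
  · exact Or.inl h0
  · exact Or.inr (lt_of_le_of_lt (totalDegree_smul_le c q) h)

lemma small_mul_left {n : ℕ} {p q : P n} {D E : ℕ} (hp : p.totalDegree ≤ E)
    (hq : Small q D) : Small (p * q) (E + D) := by
  rcases hq with rfl | hq
  · simpa using small_zero (E + D)
  rcases eq_or_ne (p * q) 0 with h0 | h0
  · exact Or.inl h0
  · exact Or.inr (lt_of_le_of_lt (totalDegree_mul p q)
      (by omega))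

lemma small_mul_right {n : ℕ} {p q : P n} {D E : ℕ} (hp : Small p D)
    (hq : q.totalDegree ≤ E) : Small (p * q) (D + E) := by
  rw [mul_comm, Nat.add_comm]
  exact small_mul_left hq hp

/-- coefficients at exponents of degree `≥ D` vanish for `Small q D`. -/
lemma small_coeff {n : ℕ} {q : P n} {D : ℕ} (h : Small q D) (d : Fin n →₀ ℕ)
    (hd : D ≤ ∑ i : Fin n, d i) : coeff d q = 0 := by
  rcases h with rfl | h
  · simp
  apply coeff_eq_zero_of_totalDegree_lt
  rw [degree_eq_sum]
  omega

lemma prod_small {n : ℕ} {ι : Type*} (s : Finset ι) (f g : ι → P n) (d : ι → ℕ)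
    (hg : ∀ i ∈ s, (g i).totalDegree ≤ d i)
    (hfg : ∀ i ∈ s, Small (f i - g i) (d i)) :
    Small ((∏ i ∈ s, f i) - ∏ i ∈ s, g i) (∑ i ∈ s, d i) := by
  classical
  induction s using Finset.induction_on with
  | empty => simpa using small_zero 0
  | @insert a s ha ih =>
    have hga := hg a (Finset.mem_insert_self _ _)
    have hfga := hfg a (Finset.mem_insert_self _ _)
    have hg' := fun i hi => hg i (Finset.mem_insert_of_mem hi)
    have hfg' := fun i hi => hfg i (Finset.mem_insert_of_mem hi)
    have ih' := ih hg' hfg'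
    have hfa : (f a).totalDegree ≤ d a := by
      have : f a = (f a - g a) + g a := by ring
      rw [this]
      refine le_trans (totalDegree_add _ _) (max_le ?_ hga)
      rcases hfga with h0 | h0
      · simp [h0]
      · exact le_of_lt h0
    have hGs : (∏ i ∈ s, g i).totalDegree ≤ ∑ i ∈ s, d i :=
      le_trans (totalDegree_finset_prod s g) (Finset.sum_le_sum hg')
    rw [Finset.prod_insert ha, Finset.prod_insert ha, Finset.sum_insert ha]
    have key : f a * ∏ i ∈ s, f i - g a * ∏ i ∈ s, g i =
        f a * ((∏ i ∈ s, f i) - ∏ i ∈ s, g i) + (f a - g a) * ∏ i ∈ s, g i := by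
      ring
    rw [key]
    exact small_add (small_mul_left hfa ih') (small_mul_right hfga hGs)

lemma dm_small {n : ℕ} (i : Fin n) (k : ℕ) :
    Small (dm n i k - X i ^ k) k := by
  have h := prod_small (Finset.range k)
    (fun j => (X i + C (MvPolynomial.X j : R) : P n))
    (fun _ => (X i : P n)) (fun _ => 1)
    (fun j _ => le_of_eq (totalDegree_X i))
    (fun j _ => by
      have : (X i + C (MvPolynomial.X j : R) : P n) - X i = C (MvPolynomial.X j : R) := by
        ring
      rw [this]
      exact Or.inr (by simp [totalDegree_C]))
  simpa [dm, Finset.prod_const, Finset.card_range] using h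

lemma prod_dm_small {n : ℕ} (σ : Equiv.Perm (Fin n)) (ν : Fin n → ℕ) :
    Small ((∏ i : Fin n, dm n (σ i) (ν i)) - monomial (fs (ν ∘ ⇑σ.symm)) (1 : R))
      (∑ i : Fin n, ν i) := by
  have h := prod_small Finset.univ (fun i => dm n (σ i) (ν i))
    (fun i => (X (σ i) : P n) ^ ν i) ν
    (fun i _ => le_of_eq (totalDegree_X_pow _ _))
    (fun i _ => dm_small (σ i) (ν i))
  rwa [prod_X_pow_perm] at h

lemma a_sub_m_small {n : ℕ} (ν : Fin n → ℕ) :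
    Small (aPoly n ν - mPoly n ν) (∑ i : Fin n, ν i) := by
  unfold aPoly mPoly
  rw [← Finset.sum_sub_distrib]
  apply small_sum
  intro σ _
  simpa [smul_sub] using small_zsmul ((Equiv.Perm.sign σ : ℤ)) (prod_dm_small σ ν)

/-- total degree of `mPoly` is at most the degree of `ν`. -/
lemma mPoly_totalDegree {n : ℕ} (ν : Fin n → ℕ) :
    (mPoly n ν).totalDegree ≤ ∑ i : Fin n, ν i := by
  unfold mPoly
  refine le_trans (totalDegree_finset_sum _ _) ?_
  apply Finset.sup_le
  intro σ _
  refine le_trans (totalDegree_smul_le _ _) ?_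
  refine le_trans (totalDegree_monomial_le _ _) ?_
  rw [Finsupp.sum_fintype _ _ (fun _ => rfl)]
  simpa using le_of_eq (Equiv.sum_comp σ.symm ν)

lemma small_rsmul {n : ℕ} {q : P n} {D : ℕ} (c : R) (h : Small q D) :
    Small (c • q) D := by
  rcases h with rfl | h
  · simpa using small_zero D
  rcases eq_or_ne (c • q) 0 with h0 | h0
  · exact Or.inl h0
  · exact Or.inr (lt_of_le_of_lt (totalDegree_smul_le c q) h)

open Classical in
/-- the strictly antitone part of the support of `f`. -/
def Dsupp {n : ℕ} (f : P n) : Finset (Fin n →₀ ℕ) :=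
  f.support.filter fun e => StrictAnti ⇑e

lemma mem_Dsupp {n : ℕ} {f : P n} {e : Fin n →₀ ℕ} :
    e ∈ Dsupp f ↔ e ∈ f.support ∧ StrictAnti ⇑e := by
  classical
  simp [Dsupp]

/-- the fundamental representation of a skew polynomial in terms of
antisymmetrized monomials. -/
lemma skew_rep {n : ℕ} {f : P n} (hf : IsSkew n f) :
    f = ∑ e ∈ Dsupp f, coeff e f • mPoly n ⇑e := by
  apply MvPolynomial.ext
  intro d
  by_cases hinj : Function.Injective ⇑d
  · obtain ⟨σ₀, hσ₀⟩ := exists_sort ⇑d hinj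
    set ν₀ : Fin n → ℕ := ⇑d ∘ ⇑σ₀ with hν₀def
    have hcc : coeff (fs ν₀) f = (Equiv.Perm.sign σ₀ : ℤ) • coeff d f := by
      have := skew_coeff hf σ₀ ⇑d
      rwa [fs_coe] at this
    have hterm : ∀ e ∈ Dsupp f,
        coeff d (coeff e f • mPoly n ⇑e) =
          if e = fs ν₀ then coeff e f * ((Equiv.Perm.sign σ₀ : ℤ) : R) else 0 := by
      intro e he
      have hanti : StrictAnti ⇑e := (mem_Dsupp.mp he).2
      rw [coeff_smul, coeff_mPoly_inj hanti σ₀ hσ₀]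
      by_cases hh : ⇑e = ν₀
      · have he' : e = fs ν₀ := by rw [← hh, fs_coe]
        simp [hh, he', smul_eq_mul, ← hν₀def]
      · have he' : e ≠ fs ν₀ := fun hc => hh (by rw [hc, coe_fs])
        simp [hh, he', ← hν₀def]
    rw [MvPolynomial.coeff_sum, Finset.sum_congr rfl hterm, Finset.sum_ite_eq']
    have hval : coeff d f = coeff (fs ν₀) f * ((Equiv.Perm.sign σ₀ : ℤ) : R) := by
      rcases Int.units_eq_one_or (Equiv.Perm.sign σ₀) with h | h
      · rw [h] at hcc ⊢
        simpa using hcc.symm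
      · rw [h] at hcc ⊢
        simp only [Units.val_neg, Units.val_one, neg_smul, one_smul] at hcc
        push_cast
        rw [hcc]
        ring
    by_cases hmem : fs ν₀ ∈ Dsupp f
    · simp [hmem, hval]
    · have hz : coeff (fs ν₀) f = 0 := by
        by_contra hne
        apply hmem
        rw [mem_Dsupp]
        refine ⟨mem_support_iff.mpr hne, ?_⟩
        rw [coe_fs]
        exact hσ₀
      rw [hval, hz]
      simp [hmem]
  · have hL : coeff d f = 0 := by
      have := skew_coeff_not_inj hf hinj
      rwa [fs_coe] at this
    rw [hL, MvPolynomial.coeff_sum]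
    symm
    apply Finset.sum_eq_zero
    intro e he
    rw [coeff_smul, coeff_mPoly_of_not_inj (mem_Dsupp.mp he).2 hinj, smul_zero]

/-- the coefficient of `a_ν` at a top-degree antitone exponent. -/
lemma coeff_aPoly_top {n : ℕ} (ν ν₀ : {ν : Fin n → ℕ // StrictAnti ν})
    (hdeg : ∑ i : Fin n, ν.1 i ≤ ∑ i : Fin n, ν₀.1 i) :
    coeff (fs ν₀.1) (aPoly n ν.1) = if ν = ν₀ then 1 else 0 := by
  have h1 : coeff (fs ν₀.1) (aPoly n ν.1 - mPoly n ν.1) = 0 := by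
    apply small_coeff (a_sub_m_small ν.1)
    simpa using hdeg
  have h2 : coeff (fs ν₀.1) (mPoly n ν.1) = if ν.1 = ν₀.1 then 1 else 0 := by
    have h := coeff_mPoly_inj (d := fs ν₀.1) ν.2 (1 : Equiv.Perm (Fin n))
      (by simpa using ν₀.2)
    simpa [Equiv.Perm.coe_one, Function.comp] using h
  have h3 : coeff (fs ν₀.1) (aPoly n ν.1) =
      coeff (fs ν₀.1) (mPoly n ν.1) + coeff (fs ν₀.1) (aPoly n ν.1 - mPoly n ν.1) := by
    rw [← MvPolynomial.coeff_add]
    congr 1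
    ring
  rw [h3, h1, h2, add_zero]
  by_cases hh : ν = ν₀
  · simp [hh]
  · have : ν.1 ≠ ν₀.1 := fun hc => hh (Subtype.ext hc)
    simp [hh, this]

lemma aPoly_linearIndependent (n : ℕ) :
    LinearIndependent R (fun ν : {ν : Fin n → ℕ // StrictAnti ν} => aPoly n ν.1) := by
  rw [linearIndependent_iff]
  intro l hl
  by_contra hlne
  have hsupp : l.support.Nonempty := Finsupp.support_nonempty_iff.mpr hlne
  obtain ⟨ν₀, hν₀mem, hmax⟩ :=
    Finset.exists_max_image l.support (fun ν => ∑ i : Fin n, ν.1 i) hsupp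
  have h0 : coeff (fs ν₀.1) ((Finsupp.linearCombination R
      (fun ν : {ν : Fin n → ℕ // StrictAnti ν} => aPoly n ν.1)) l) = 0 := by
    rw [hl]
    simp
  rw [Finsupp.linearCombination_apply, Finsupp.sum, MvPolynomial.coeff_sum] at h0
  have hterm : ∀ ν ∈ l.support,
      coeff (fs ν₀.1) (l ν • aPoly n ν.1) = if ν = ν₀ then l ν else 0 := by
    intro ν hν
    rw [coeff_smul, coeff_aPoly_top ν ν₀ (hmax ν hν), smul_eq_mul]
    by_cases hh : ν = ν₀ <;> simp [hh]
  rw [Finset.sum_congr rfl hterm, Finset.sum_ite_eq'] at h0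
  rw [if_pos hν₀mem] at h0
  exact (Finsupp.mem_support_iff.mp hν₀mem) h0

lemma skew_mem_span {n : ℕ} : ∀ (D : ℕ) (f : P n), IsSkew n f → f.totalDegree < D →
    f ∈ Submodule.span R
      (Set.range (fun ν : {ν : Fin n → ℕ // StrictAnti ν} => aPoly n ν.1)) := by
  intro D
  induction D using Nat.strong_induction_on with
  | _ D ih =>
    intro f hf hfD
    have hrep := skew_rep hf
    set g := f - ∑ e ∈ Dsupp f, coeff e f • aPoly n ⇑e with hgdef
    have hsum_mem : (∑ e ∈ Dsupp f, coeff e f • aPoly n ⇑e) ∈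
        Submodule.span R
          (Set.range (fun ν : {ν : Fin n → ℕ // StrictAnti ν} => aPoly n ν.1)) := by
      apply Submodule.sum_mem
      intro e he
      apply Submodule.smul_mem
      apply Submodule.subset_span
      exact ⟨⟨⇑e, (mem_Dsupp.mp he).2⟩, rfl⟩
    have hsum_skew : (∑ e ∈ Dsupp f, coeff e f • aPoly n ⇑e) ∈ SkewSub n :=
      Submodule.sum_mem _ fun e _ => Submodule.smul_mem _ _ (aPoly_skew ⇑e)
    have hg_skew : IsSkew n g := (SkewSub n).sub_mem hf hsum_skew
    have hgsmall : Small g f.totalDegree := by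
      have hg2 : g = ∑ e ∈ Dsupp f, coeff e f • (mPoly n ⇑e - aPoly n ⇑e) := by
        rw [hgdef]
        nth_rewrite 1 [hrep]
        rw [← Finset.sum_sub_distrib]
        apply Finset.sum_congr rfl
        intro e _
        rw [smul_sub]
      rw [hg2]
      apply small_sum
      intro e he
      have hdeg_e : (∑ i : Fin n, (⇑e : Fin n → ℕ) i) ≤ f.totalDegree := by
        have hsup : e ∈ f.support := (mem_Dsupp.mp he).1
        have h := le_totalDegree hsup
        rwa [Finsupp.sum_fintype _ _ (fun _ => rfl)] at h
      have h1 : Small (mPoly n ⇑e - aPoly n ⇑e) (∑ i : Fin n, (⇑e : Fin n → ℕ) i) := by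
        have h2 := small_zsmul (-1 : ℤ) (a_sub_m_small (⇑e))
        have h3 : (-1 : ℤ) • (aPoly n ⇑e - mPoly n ⇑e) = mPoly n ⇑e - aPoly n ⇑e := by
          simp
        exact h3 ▸ h2
      exact small_mono (small_rsmul _ h1) hdeg_e
    rcases hgsmall with hg0 | hglt
    · have hfeq : f = ∑ e ∈ Dsupp f, coeff e f • aPoly n ⇑e := by
        have := sub_eq_zero.mp hg0
        exact this
      rw [hfeq]
      exact hsum_mem
    · have hgspan := ih f.totalDegree hfD g hg_skew hglt
      have hfeq : f = g + ∑ e ∈ Dsupp f, coeff e f • aPoly n ⇑e := by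
        rw [hgdef]; ring
      rw [hfeq]
      exact Submodule.add_mem _ hgspan hsum_mem

lemma aPoly_span (n : ℕ) :
    Submodule.span R
        (Set.range (fun ν : {ν : Fin n → ℕ // StrictAnti ν} => aPoly n ν.1)) =
      SkewSub n := by
  apply le_antisymm
  · rw [Submodule.span_le]
    rintro _ ⟨ν, rfl⟩
    exact aPoly_skew ν.1
  · intro f hf
    exact skew_mem_span (f.totalDegree + 1) f hf (Nat.lt_succ_self _)

end Skew

theorem stmt_3 (n : ℕ) (hn : 1 ≤ n) :
    LinearIndependent R (fun ν : {ν : Fin n → ℕ // StrictAnti ν} => aPoly n ν.1) ∧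
    Submodule.span R
        (Set.range (fun ν : {ν : Fin n → ℕ // StrictAnti ν} => aPoly n ν.1)) =
      SkewSub n :=
  ⟨Skew.aPoly_linearIndependent n, Skew.aPoly_span n⟩

end
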